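/- Let θ be an inner function. Every element f of the space X can be represented as a linear combination f = f₁ − f₂ + i f₃ − i f₄ of four nonnegative elements f₁, f₂, f₃, f₄ of X; moreover each fⱼ can be taken with ‖fⱼ‖_X ≤ ‖f‖_X. -/

import Mathlib

open MeasureTheory Complex Filter

noncomputable section
open scoped Classical

/-- The unit circle `𝕋` in `ℂ`. -/
def sphere1 : Set ℂ := Metric.sphere (0 : ℂ) 1

/-- Normalized Lebesgue (arc-length) measure `m` on the unit circle,
as a Borel measure on `ℂ`. -/
def mT : MeasureTheory.Measure ℂ :=
  (ENNReal.ofReal (2 * Real.pi)⁻¹) •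
    MeasureTheory.Measure.map (fun t : ℝ => Complex.exp (t * Complex.I))
      (MeasureTheory.volume.restrict (Set.Ioc 0 (2 * Real.pi)))

/-- Vanishing of all Fourier coefficients of negative index: the defining property of
(boundary values of) Hardy space functions. -/
def NegCoeffVanish (f : ℂ → ℂ) : Prop :=
  ∀ n : ℕ, 1 ≤ n → ∫ z, f z * z ^ n ∂mT = 0

/-- `θ` is (the boundary-value function of) an inner function: it is in `H^∞` and
has unimodular boundary values `m`-a.e. -/
structure IsInner (θ : ℂ → ℂ) : Prop where
  meas : AEStronglyMeasurable θ mT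
  hardy : NegCoeffVanish θ
  unimod : ∀ᵐ z ∂mT, ‖θ z‖ = 1

/-- Membership in the model (star-invariant) space `K_θ^p = H^p ∩ θ H^p₋`,
described via boundary values: `f ∈ L^p`, `f ∈ H^p`, and `θ z̄ f̄ ∈ H^p`. -/
def MemK (p : ENNReal) (θ f : ℂ → ℂ) : Prop :=
  MemLp f p mT ∧ NegCoeffVanish f ∧
    NegCoeffVanish (fun z => θ z * (starRingEnd ℂ) (z * f z))

/-- The `L²(m)` norm of a boundary function, as a real number. -/
def norm2 (f : ℂ → ℂ) : ℝ := (eLpNorm f 2 mT).toReal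

/-- The `L²(m)` pairing `(f, g) = ∫ f ḡ dm`. -/
def ip (f g : ℂ → ℂ) : ℂ := ∫ z, f z * (starRingEnd ℂ) (g z) ∂mT

/-- `L²` of the circle. -/
abbrev L2T := MeasureTheory.Lp ℂ 2 mT

/-- `K_θ = K_θ²` as a subset of `L²` of the circle. -/
def Kset (θ : ℂ → ℂ) : Set L2T := {f | MemK 2 θ ⇑f}

/-- `A` is a bounded operator "on `K_θ`": it maps `K_θ` into itself and vanishes on the
orthogonal complement of `K_θ` (so that it is determined by its restriction to `K_θ`). -/
def OpOnK (θ : ℂ → ℂ) (A : L2T →L[ℂ] L2T) : Prop :=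
  (∀ f ∈ Kset θ, A f ∈ Kset θ) ∧
    ∀ f : L2T, (∀ g ∈ Kset θ, ip ⇑f ⇑g = 0) → A f = 0

/-- `φ` is a symbol of the operator `A` on `K_θ`: `(A f, g) = (φ f, g)` for all bounded
`f ∈ K_θ` and all `g ∈ K_θ`, i.e. `A f = P_θ (φ f)`. -/
def IsSymbolOf (θ : ℂ → ℂ) (A : L2T →L[ℂ] L2T) (φ : ℂ → ℂ) : Prop :=
  ∀ f g : L2T, f ∈ Kset θ → g ∈ Kset θ → (∃ C : ℝ, ∀ᵐ z ∂mT, ‖f z‖ ≤ C) →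
    ip ⇑(A f) ⇑g = ∫ z, φ z * f z * (starRingEnd ℂ) (g z) ∂mT

/-- `A` is a bounded truncated Toeplitz operator on `K_θ` (the class `𝒯(θ)`):
a bounded operator on `K_θ` possessing an `L²` symbol. -/
def IsTTO (θ : ℂ → ℂ) (A : L2T →L[ℂ] L2T) : Prop :=
  OpOnK θ A ∧ ∃ φ : ℂ → ℂ, MemLp φ 2 mT ∧ IsSymbolOf θ A φ

/-- `A` admits a bounded symbol `φ ∈ L^∞`. -/
def HasBoundedSymbol (θ : ℂ → ℂ) (A : L2T →L[ℂ] L2T) : Prop :=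
  ∃ φ : ℂ → ℂ, MemLp φ ⊤ mT ∧ IsSymbolOf θ A φ

/-- The Cauchy integral extension of a boundary function to the disk:
for `f ∈ H^1` and `|w| < 1` this recovers the value at `w` of the analytic extension. -/
def cauchyExt (f : ℂ → ℂ) (w : ℂ) : ℂ :=
  ∫ z, f z / (1 - w * (starRingEnd ℂ) z) ∂mT

/-- Extension of a boundary function to the closed disk: inside the open disk take the
analytic (Cauchy integral) extension; elsewhere keep the boundary values. -/
def diskExt (f : ℂ → ℂ) : ℂ → ℂ :=
  fun w => if w ∈ Metric.ball (0 : ℂ) 1 then cauchyExt f w else f w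

/-- The class `D_p(θ)` (for positive measures): finite Borel measures on the closed unit
disk for which the embedding `K_θ^p ⊂ L^p(μ)` is bounded, the bound being imposed on the
dense subset of functions of `K_θ^p` continuous up to the boundary. -/
def MemD (p : ENNReal) (θ : ℂ → ℂ) (μ : MeasureTheory.Measure ℂ) : Prop :=
  MeasureTheory.IsFiniteMeasure μ ∧ μ (Metric.closedBall (0 : ℂ) 1)ᶜ = 0 ∧
    ∃ C : ℝ, 0 ≤ C ∧ ∀ f : ℂ → ℂ, MemK p θ f → ContinuousOn f sphere1 →
      eLpNorm (diskExt f) p μ ≤ ENNReal.ofReal C * eLpNorm f p mT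

/-- The class `C_p(θ)` (for positive measures): measures of `D_p(θ)` supported on the
unit circle. -/
def MemC (p : ENNReal) (θ : ℂ → ℂ) (μ : MeasureTheory.Measure ℂ) : Prop :=
  MemD p θ μ ∧ μ sphere1ᶜ = 0

/-- The complex measure `w dν` (given by its total variation `ν` and a density `w`)
is a quasisymbol of `A`: `(A f, g) = ∫ f ḡ w dν` for all `f, g ∈ K_θ` continuous
up to the boundary. -/
def IsQuasisymbolOf (θ : ℂ → ℂ) (A : L2T →L[ℂ] L2T) (ν : MeasureTheory.Measure ℂ)
    (w : ℂ → ℂ) : Prop :=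
  ∀ f g : L2T, f ∈ Kset θ → g ∈ Kset θ →
    ∀ fc gc : ℂ → ℂ, ContinuousOn fc sphere1 → ContinuousOn gc sphere1 →
      (⇑f =ᵐ[mT] fc) → (⇑g =ᵐ[mT] gc) →
      ip ⇑(A f) ⇑g = ∫ z, fc z * (starRingEnd ℂ) (gc z) * w z ∂ν

/-- `opFormF A f g = (A f, g)`, where the elements `f, g` of `K_θ` are given as boundary
functions and `A f` is computed through the `L²` class of `f`. -/
def opFormF (A : L2T →L[ℂ] L2T) (f g : ℂ → ℂ) : ℂ :=
  if hf : MemLp f 2 mT then ip ⇑(A (MemLp.toLp f hf)) g else 0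

/-- A representation of `f` as `∑_k x_k ȳ_k` with `x_k, y_k ∈ K_θ` and
`∑_k ‖x_k‖₂·‖y_k‖₂ < ∞`, witnessing that `f` belongs to the space `X`. -/
structure XRep (θ : ℂ → ℂ) (f : ℂ → ℂ) (x y : ℕ → ℂ → ℂ) : Prop where
  memx : ∀ k, MemK 2 θ (x k)
  memy : ∀ k, MemK 2 θ (y k)
  sum : Summable fun k => norm2 (x k) * norm2 (y k)
  repr : ∀ᵐ z ∂mT, f z = ∑' k, x k z * (starRingEnd ℂ) (y k z)

/-- Membership in the space `X = {∑_k x_k ȳ_k}`. -/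
def MemX (θ : ℂ → ℂ) (f : ℂ → ℂ) : Prop := ∃ x y, XRep θ f x y

/-- The norm of the space `X`: the infimum of `∑_k ‖x_k‖₂·‖y_k‖₂` over all
representations. -/
def XNorm (θ : ℂ → ℂ) (f : ℂ → ℂ) : ℝ :=
  sInf {c | ∃ x y, XRep θ f x y ∧ (∑' k, norm2 (x k) * norm2 (y k)) = c}



/-! ### Auxiliary lemmas -/

lemma measurable_circleMap' : Measurable (fun t : ℝ => Complex.exp (t * Complex.I)) := by
  fun_prop

instance : IsFiniteMeasure mT := by
  constructor
  rw [mT]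
  simp only [Measure.smul_apply, smul_eq_mul]
  rw [Measure.map_apply measurable_circleMap' MeasurableSet.univ]
  simp only [Set.preimage_univ, Measure.restrict_apply, Set.univ_inter]
  exact ENNReal.mul_lt_top ENNReal.ofReal_lt_top (by simp [Real.volume_Ioc]; exact ENNReal.mul_lt_top (by norm_num) ENNReal.ofReal_lt_top)

lemma mT_ae_norm_one : ∀ᵐ z ∂mT, ‖z‖ = 1 := by
  rw [ae_iff, mT]
  simp only [Measure.smul_apply, smul_eq_mul]
  have hms : MeasurableSet {a : ℂ | ¬ ‖a‖ = 1} :=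
    (measurableSet_eq_fun (measurable_norm) measurable_const).compl
  rw [Measure.map_apply measurable_circleMap' hms]
  have : (fun t : ℝ => Complex.exp (t * Complex.I)) ⁻¹' {a : ℂ | ¬ ‖a‖ = 1} = ∅ := by
    ext t
    simp only [Set.mem_preimage, Set.mem_setOf_eq, Set.mem_empty_iff_false, iff_false, not_not]
    rw [Complex.norm_exp]
    simp
  rw [this]
  simp

lemma integrable_mul_pow {f : ℂ → ℂ} (hf : MemLp f 2 mT) (n : ℕ) :
    Integrable (fun z => f z * z ^ n) mT := by
  have hint : Integrable f mT := hf.integrable one_le_two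
  refine Integrable.mono' hint.norm
    (hf.aestronglyMeasurable.mul ((continuous_pow n).aestronglyMeasurable)) ?_
  filter_upwards [mT_ae_norm_one] with z hz
  simp [norm_mul, norm_pow, hz]

lemma integrable_theta_pow {θ f : ℂ → ℂ} (hθ : IsInner θ) (hf : MemLp f 2 mT) (n : ℕ) :
    Integrable (fun z => θ z * (starRingEnd ℂ) (z * f z) * z ^ n) mT := by
  have hint : Integrable f mT := hf.integrable one_le_two
  have hm : AEStronglyMeasurable (fun z => θ z * (starRingEnd ℂ) (z * f z) * z ^ n) mT := by
    refine ((hθ.meas.mul ?_).mul ((continuous_pow n).aestronglyMeasurable))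
    exact (Complex.continuous_conj.comp_aestronglyMeasurable
      (aestronglyMeasurable_id.mul hf.aestronglyMeasurable))
  refine Integrable.mono' hint.norm hm ?_
  filter_upwards [mT_ae_norm_one, hθ.unimod] with z hz hθz
  simp [norm_mul, norm_pow, hz, hθz, RCLike.norm_conj]

lemma MemK_zero (θ : ℂ → ℂ) : MemK 2 θ (fun _ => (0 : ℂ)) := by
  refine ⟨?_, ?_, ?_⟩
  · simpa using memLp_const (μ := mT) (0 : ℂ)
  · intro n hn; simp
  · intro n hn; simp

lemma MemK.const_mul {θ f : ℂ → ℂ} (hf : MemK 2 θ f) (c : ℂ) :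
    MemK 2 θ (fun z => c * f z) := by
  obtain ⟨h1, h2, h3⟩ := hf
  refine ⟨?_, ?_, ?_⟩
  · exact h1.const_smul c
  · intro n hn
    have : (fun z => (c * f z) * z ^ n) = fun z => c * (f z * z ^ n) := by
      funext z; ring
    rw [this, integral_const_mul, h2 n hn, mul_zero]
  · intro n hn
    have : (fun z => θ z * (starRingEnd ℂ) (z * (c * f z)) * z ^ n)
        = fun z => (starRingEnd ℂ) c * (θ z * (starRingEnd ℂ) (z * f z) * z ^ n) := by
      funext z; simp only [map_mul]; ring
    rw [this, integral_const_mul, h3 n hn, mul_zero]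

lemma MemK.add {θ f g : ℂ → ℂ} (hθ : IsInner θ) (hf : MemK 2 θ f) (hg : MemK 2 θ g) :
    MemK 2 θ (fun z => f z + g z) := by
  obtain ⟨h1, h2, h3⟩ := hf
  obtain ⟨k1, k2, k3⟩ := hg
  refine ⟨h1.add k1, ?_, ?_⟩
  · intro n hn
    have : (fun z => (f z + g z) * z ^ n) = fun z => f z * z ^ n + g z * z ^ n := by
      funext z; ring
    rw [this, integral_add (integrable_mul_pow h1 n) (integrable_mul_pow k1 n),
      h2 n hn, k2 n hn, add_zero]
  · intro n hn
    have : (fun z => θ z * (starRingEnd ℂ) (z * (f z + g z)) * z ^ n)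
        = fun z => θ z * (starRingEnd ℂ) (z * f z) * z ^ n
            + θ z * (starRingEnd ℂ) (z * g z) * z ^ n := by
      funext z; simp only [mul_add, map_add, map_mul]; ring
    rw [this, integral_add (integrable_theta_pow hθ h1 n) (integrable_theta_pow hθ k1 n),
      h3 n hn, k3 n hn, add_zero]

lemma norm2_nonneg' (f : ℂ → ℂ) : 0 ≤ norm2 f := ENNReal.toReal_nonneg

lemma cs_integral {x y : ℂ → ℂ} (hx : MemLp x 2 mT) (hy : MemLp y 2 mT) :
    Integrable (fun z => ‖x z‖ * ‖y z‖) mT ∧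
      ∫ z, ‖x z‖ * ‖y z‖ ∂mT ≤ norm2 x * norm2 y := by
  have hx' : MemLp (fun z => ‖x z‖) 2 mT := hx.norm
  have hy' : MemLp (fun z => ‖y z‖) 2 mT := hy.norm
  set A : MeasureTheory.Lp ℝ 2 mT := hx'.toLp _
  set B : MeasureTheory.Lp ℝ 2 mT := hy'.toLp _
  have hA : ⇑A =ᵐ[mT] fun z => ‖x z‖ := hx'.coeFn_toLp
  have hB : ⇑B =ᵐ[mT] fun z => ‖y z‖ := hy'.coeFn_toLp
  have hint : Integrable (fun z => (A z) * (B z)) mT := by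
    have := MeasureTheory.L2.integrable_inner (𝕜 := ℝ) A B
    have h' : Integrable (fun z => (B z) * (A z)) mT := by
      simpa [RCLike.inner_apply, starRingEnd_apply] using this
    exact h'.congr (Eventually.of_forall fun z => mul_comm _ _)
  have hint2 : Integrable (fun z => ‖x z‖ * ‖y z‖) mT := by
    refine hint.congr ?_
    filter_upwards [hA, hB] with z h1 h2
    rw [h1, h2]
  refine ⟨hint2, ?_⟩
  have hinner : inner ℝ A B = ∫ z, (A z) * (B z) ∂mT := by
    rw [MeasureTheory.L2.inner_def]
    congr 1
    funext z
    simp [RCLike.inner_apply, mul_comm]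
  have h2 : ∫ z, ‖x z‖ * ‖y z‖ ∂mT = inner ℝ A B := by
    rw [hinner]
    refine integral_congr_ae ?_
    filter_upwards [hA, hB] with z h1 h2
    rw [h1, h2]
  rw [h2]
  calc inner ℝ A B ≤ ‖A‖ * ‖B‖ := real_inner_le_norm A B
    _ = norm2 x * norm2 y := by
        rw [MeasureTheory.Lp.norm_toLp, MeasureTheory.Lp.norm_toLp, norm2, norm2,
          eLpNorm_norm, eLpNorm_norm]

lemma integrable_mul_conj {x y : ℂ → ℂ} (hx : MemLp x 2 mT) (hy : MemLp y 2 mT) :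
    Integrable (fun z => x z * (starRingEnd ℂ) (y z)) mT := by
  refine Integrable.mono' (cs_integral hx hy).1
    (hx.aestronglyMeasurable.mul
      (Complex.continuous_conj.comp_aestronglyMeasurable hy.aestronglyMeasurable)) ?_
  refine Eventually.of_forall fun z => ?_
  simp [norm_mul, RCLike.norm_conj]

lemma norm_integral_mul_conj {x y : ℂ → ℂ} (hx : MemLp x 2 mT) (hy : MemLp y 2 mT) :
    ‖∫ z, x z * (starRingEnd ℂ) (y z) ∂mT‖ ≤ norm2 x * norm2 y := by
  calc ‖∫ z, x z * (starRingEnd ℂ) (y z) ∂mT‖ ≤ ∫ z, ‖x z * (starRingEnd ℂ) (y z)‖ ∂mT :=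
        norm_integral_le_integral_norm _
    _ = ∫ z, ‖x z‖ * ‖y z‖ ∂mT := by
        refine integral_congr_ae (Eventually.of_forall fun z => ?_)
        simp [norm_mul, RCLike.norm_conj]
    _ ≤ norm2 x * norm2 y := (cs_integral hx hy).2

lemma nsq_integrable {g : ℂ → ℂ} (hg : MemLp g 2 mT) :
    Integrable (fun z => ‖g z‖ ^ 2) mT := by
  have := (cs_integral hg hg).1
  refine this.congr (Eventually.of_forall fun z => by simp [sq])

lemma nsq_eq {g : ℂ → ℂ} (hg : MemLp g 2 mT) :
    ∫ z, ‖g z‖ ^ 2 ∂mT = norm2 g ^ 2 := by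
  have hg' : MemLp (fun z => ‖g z‖) 2 mT := hg.norm
  set A : MeasureTheory.Lp ℝ 2 mT := hg'.toLp _
  have hA : ⇑A =ᵐ[mT] fun z => ‖g z‖ := hg'.coeFn_toLp
  have h1 : ∫ z, ‖g z‖ ^ 2 ∂mT = inner ℝ A A := by
    rw [MeasureTheory.L2.inner_def]
    refine integral_congr_ae ?_
    filter_upwards [hA] with z h1
    simp [RCLike.inner_apply, starRingEnd_apply, h1, sq]
  rw [h1, real_inner_self_eq_norm_sq, MeasureTheory.Lp.norm_toLp, norm2, eLpNorm_norm]


lemma norm2_const_mul (c : ℂ) (f : ℂ → ℂ) : norm2 (fun z => c * f z) = ‖c‖ * norm2 f := by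
  have : (fun z => c * f z) = c • f := rfl
  rw [norm2, this, eLpNorm_const_smul, ENNReal.toReal_mul, norm2]
  simp

lemma ae_zero_of_norm2_zero {g : ℂ → ℂ} (hg : MemLp g 2 mT) (h : norm2 g = 0) :
    g =ᵐ[mT] 0 := by
  have h2 : eLpNorm g 2 mT = 0 := by
    have := hg.2.ne
    rw [norm2] at h
    exact (ENNReal.toReal_eq_zero_iff _).1 h |>.resolve_right this
  exact (eLpNorm_eq_zero_iff hg.aestronglyMeasurable (by norm_num)).1 h2

/-- Every representation can be balanced: `‖x_k‖₂ = ‖y_k‖₂` with the same products. -/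
lemma exists_balanced {θ f : ℂ → ℂ} {x y : ℕ → ℂ → ℂ} (hr : XRep θ f x y) :
    ∃ x' y' : ℕ → ℂ → ℂ, XRep θ f x' y' ∧ (∀ k, norm2 (x' k) = norm2 (y' k)) ∧
      (∀ k, norm2 (x' k) * norm2 (y' k) = norm2 (x k) * norm2 (y k)) := by
  classical
  set a : ℕ → ℝ := fun k => norm2 (x k) with ha
  set b : ℕ → ℝ := fun k => norm2 (y k) with hb
  set x' : ℕ → ℂ → ℂ := fun k => if a k = 0 ∨ b k = 0 then (fun _ => 0)
    else fun z => (Real.sqrt (b k / a k) : ℂ) * x k z with hx'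
  set y' : ℕ → ℂ → ℂ := fun k => if a k = 0 ∨ b k = 0 then (fun _ => 0)
    else fun z => (Real.sqrt (a k / b k) : ℂ) * y k z with hy'
  have hnx : ∀ k, norm2 (x' k) = if a k = 0 ∨ b k = 0 then 0 else Real.sqrt (a k * b k) := by
    intro k
    by_cases hk : a k = 0 ∨ b k = 0
    · simp only [hx', hk, if_true]
      have : norm2 (fun _ : ℂ => (0 : ℂ)) = 0 := by
        rw [norm2, eLpNorm_zero']; rfl
      simpa using this
    · push_neg at hk
      have ha0 : 0 < a k := lt_of_le_of_ne (norm2_nonneg' _) (Ne.symm hk.1)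
      have hb0 : 0 < b k := lt_of_le_of_ne (norm2_nonneg' _) (Ne.symm hk.2)
      simp only [hx', hk.1, hk.2, or_self, if_false]
      rw [norm2_const_mul]
      have hnn : ‖((Real.sqrt (b k / a k) : ℝ) : ℂ)‖ = Real.sqrt (b k / a k) := by
        rw [Complex.norm_real, Real.norm_eq_abs, _root_.abs_of_nonneg (Real.sqrt_nonneg _)]
      rw [hnn]
      have : a k * b k = (b k / a k) * (a k) ^ 2 := by field_simp
      rw [this, Real.sqrt_mul (div_nonneg hb0.le ha0.le), Real.sqrt_sq ha0.le]
  have hny : ∀ k, norm2 (y' k) = if a k = 0 ∨ b k = 0 then 0 else Real.sqrt (a k * b k) := by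
    intro k
    by_cases hk : a k = 0 ∨ b k = 0
    · simp only [hy', hk, if_true]
      have : norm2 (fun _ : ℂ => (0 : ℂ)) = 0 := by
        rw [norm2, eLpNorm_zero']; rfl
      simpa using this
    · push_neg at hk
      have ha0 : 0 < a k := lt_of_le_of_ne (norm2_nonneg' _) (Ne.symm hk.1)
      have hb0 : 0 < b k := lt_of_le_of_ne (norm2_nonneg' _) (Ne.symm hk.2)
      simp only [hy', hk.1, hk.2, or_self, if_false]
      rw [norm2_const_mul]
      have hnn : ‖((Real.sqrt (a k / b k) : ℝ) : ℂ)‖ = Real.sqrt (a k / b k) := by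
        rw [Complex.norm_real, Real.norm_eq_abs, _root_.abs_of_nonneg (Real.sqrt_nonneg _)]
      rw [hnn]
      have : a k * b k = (a k / b k) * (b k) ^ 2 := by field_simp
      rw [this, Real.sqrt_mul (div_nonneg ha0.le hb0.le), Real.sqrt_sq hb0.le]
  have hprod : ∀ k, norm2 (x' k) * norm2 (y' k) = a k * b k := by
    intro k
    rw [hnx k, hny k]
    by_cases hk : a k = 0 ∨ b k = 0
    · simp only [hk, if_true, mul_zero]
      rcases hk with h | h <;> rw [h] <;> ring
    · push_neg at hk
      have ha0 : 0 < a k := lt_of_le_of_ne (norm2_nonneg' _) (Ne.symm hk.1)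
      have hb0 : 0 < b k := lt_of_le_of_ne (norm2_nonneg' _) (Ne.symm hk.2)
      simp only [hk.1, hk.2, or_self, if_false]
      exact Real.mul_self_sqrt (by positivity)
  have hbal : ∀ k, norm2 (x' k) = norm2 (y' k) := fun k => by rw [hnx k, hny k]
  have hae : ∀ᵐ z ∂mT, ∀ k, x' k z * (starRingEnd ℂ) (y' k z)
      = x k z * (starRingEnd ℂ) (y k z) := by
    rw [ae_all_iff]
    intro k
    by_cases hk : a k = 0 ∨ b k = 0
    · rcases hk with h | h
      · have hz : x k =ᵐ[mT] 0 := ae_zero_of_norm2_zero (hr.memx k).1 h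
        filter_upwards [hz] with z hz0
        simp only [hx', hy']
        rcases (em (a k = 0 ∨ b k = 0)) with h' | h'
        · simp only [h', if_true]
          simp only [Pi.zero_apply] at hz0
          simp [hz0]
        · exact absurd (Or.inl h) h'
      · have hz : y k =ᵐ[mT] 0 := ae_zero_of_norm2_zero (hr.memy k).1 h
        filter_upwards [hz] with z hz0
        simp only [hx', hy']
        rcases (em (a k = 0 ∨ b k = 0)) with h' | h'
        · simp [h', Pi.zero_apply] at hz0 ⊢
          simp [hz0]
        · exact absurd (Or.inr h) h'
    · push_neg at hk
      have ha0 : 0 < a k := lt_of_le_of_ne (norm2_nonneg' _) (Ne.symm hk.1)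
      have hb0 : 0 < b k := lt_of_le_of_ne (norm2_nonneg' _) (Ne.symm hk.2)
      refine Eventually.of_forall fun z => ?_
      simp only [hx', hy', hk.1, hk.2, or_self, if_false]
      rw [map_mul, Complex.conj_ofReal]
      have hone : ((Real.sqrt (b k / a k) : ℝ) : ℂ) * ((Real.sqrt (a k / b k) : ℝ) : ℂ) = 1 := by
        rw [← Complex.ofReal_mul, ← Real.sqrt_mul (div_nonneg hb0.le ha0.le)]
        have : b k / a k * (a k / b k) = 1 := by field_simp
        rw [this, Real.sqrt_one, Complex.ofReal_one]
      calc (Real.sqrt (b k / a k) : ℂ) * x k z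
            * ((Real.sqrt (a k / b k) : ℂ) * (starRingEnd ℂ) (y k z))
          = ((Real.sqrt (b k / a k) : ℂ) * (Real.sqrt (a k / b k) : ℂ))
            * (x k z * (starRingEnd ℂ) (y k z)) := by ring
        _ = x k z * (starRingEnd ℂ) (y k z) := by rw [hone, one_mul]
  refine ⟨x', y', ⟨?_, ?_, ?_, ?_⟩, hbal, hprod⟩
  · intro k
    by_cases hk : a k = 0 ∨ b k = 0
    · simp only [hx', hk, if_true]; exact MemK_zero θ
    · simp only [hx', hk, if_false]; exact (hr.memx k).const_mul _
  · intro k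
    by_cases hk : a k = 0 ∨ b k = 0
    · simp only [hy', hk, if_true]; exact MemK_zero θ
    · simp only [hy', hk, if_false]; exact (hr.memy k).const_mul _
  · exact Summable.congr hr.sum (fun k => (hprod k).symm)
  · filter_upwards [hr.repr, hae] with z h1 h2
    rw [h1]
    exact tsum_congr fun k => (h2 k).symm


lemma rep_lintegral_bound {θ f : ℂ → ℂ} {x y : ℕ → ℂ → ℂ} (hr : XRep θ f x y) :
    ∑' k, ∫⁻ z, ‖x k z * (starRingEnd ℂ) (y k z)‖₊ ∂mT
      ≤ ENNReal.ofReal (∑' k, norm2 (x k) * norm2 (y k)) := by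
  rw [ENNReal.ofReal_tsum_of_nonneg
    (fun k => mul_nonneg (norm2_nonneg' _) (norm2_nonneg' _)) hr.sum]
  refine ENNReal.tsum_le_tsum fun k => ?_
  change ∫⁻ z, ‖x k z * (starRingEnd ℂ) (y k z)‖ₑ ∂mT ≤ _
  rw [← ofReal_integral_norm_eq_lintegral_enorm (integrable_mul_conj (hr.memx k).1 (hr.memy k).1)]
  refine ENNReal.ofReal_le_ofReal ?_
  calc ∫ z, ‖x k z * (starRingEnd ℂ) (y k z)‖ ∂mT
      = ∫ z, ‖x k z‖ * ‖y k z‖ ∂mT := by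
        refine integral_congr_ae (Eventually.of_forall fun z => ?_)
        simp [norm_mul, RCLike.norm_conj]
    _ ≤ norm2 (x k) * norm2 (y k) := (cs_integral (hr.memx k).1 (hr.memy k).1).2

lemma rep_facts {θ f : ℂ → ℂ} {x y : ℕ → ℂ → ℂ} (hr : XRep θ f x y) :
    Integrable f mT ∧ ∫ z, ‖f z‖ ∂mT ≤ ∑' k, norm2 (x k) * norm2 (y k) ∧
      (∑' k, ∫ z, x k z * (starRingEnd ℂ) (y k z) ∂mT) = ∫ z, f z ∂mT ∧
      (∀ᵐ z ∂mT, Summable fun k => ‖x k z * (starRingEnd ℂ) (y k z)‖) := by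
  have hmeas : ∀ k, AEStronglyMeasurable (fun z => x k z * (starRingEnd ℂ) (y k z)) mT :=
    fun k => (integrable_mul_conj (hr.memx k).1 (hr.memy k).1).aestronglyMeasurable
  have hbound := rep_lintegral_bound hr
  have hne : ∑' k, ∫⁻ z, ‖x k z * (starRingEnd ℂ) (y k z)‖₊ ∂mT ≠ ⊤ :=
    (lt_of_le_of_lt hbound ENNReal.ofReal_lt_top).ne
  set G : ℂ → ENNReal := fun z => ∑' k, (‖x k z * (starRingEnd ℂ) (y k z)‖₊ : ENNReal) with hG
  have hGmeas : AEMeasurable G mT := AEMeasurable.ennreal_tsum (fun k => (hmeas k).enorm)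
  have hGlint : ∫⁻ z, G z ∂mT = ∑' k, ∫⁻ z, ‖x k z * (starRingEnd ℂ) (y k z)‖₊ ∂mT :=
    lintegral_tsum (fun k => (hmeas k).enorm)
  have hGfin : ∫⁻ z, G z ∂mT ≠ ⊤ := by rw [hGlint]; exact hne
  have hae_fin : ∀ᵐ z ∂mT, G z < ⊤ := ae_lt_top' hGmeas hGfin
  have hae_summ : ∀ᵐ z ∂mT, Summable fun k => ‖x k z * (starRingEnd ℂ) (y k z)‖ := by
    filter_upwards [hae_fin] with z hz
    have h1 : Summable fun k => ‖x k z * (starRingEnd ℂ) (y k z)‖₊ :=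
      ENNReal.tsum_coe_ne_top_iff_summable.1 hz.ne
    have h2 := NNReal.summable_coe.2 h1
    simpa [coe_nnnorm] using h2
  have htend : ∀ᵐ z ∂mT, Tendsto
      (fun n => ∑ k ∈ Finset.range n, x k z * (starRingEnd ℂ) (y k z)) atTop (nhds (f z)) := by
    filter_upwards [hr.repr, hae_summ] with z h1 h2
    rw [h1]
    exact (Summable.of_norm h2).hasSum.tendsto_sum_nat
  have hfm : AEStronglyMeasurable f mT := by
    refine aestronglyMeasurable_of_tendsto_ae atTop
      (f := fun n z => ∑ k ∈ Finset.range n, x k z * (starRingEnd ℂ) (y k z)) ?_ htend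
    intro n
    exact Finset.aestronglyMeasurable_fun_sum _ (fun k _ => hmeas k)
  have hnormle : ∀ᵐ z ∂mT, (‖f z‖₊ : ENNReal) ≤ G z := by
    filter_upwards [hr.repr, hae_summ] with z h1 h2
    rw [h1]
    have hsnn : Summable fun k => ‖x k z * (starRingEnd ℂ) (y k z)‖₊ := by
      rw [← NNReal.summable_coe]
      simpa [coe_nnnorm] using h2
    calc (‖∑' k, x k z * (starRingEnd ℂ) (y k z)‖₊ : ENNReal)
        ≤ ((∑' k, ‖x k z * (starRingEnd ℂ) (y k z)‖₊ : NNReal) : ENNReal) :=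
          ENNReal.coe_le_coe.2 (nnnorm_tsum_le hsnn)
      _ = G z := ENNReal.coe_tsum hsnn
  have hflint : ∫⁻ z, (‖f z‖₊ : ENNReal) ∂mT
      ≤ ENNReal.ofReal (∑' k, norm2 (x k) * norm2 (y k)) := by
    calc ∫⁻ z, (‖f z‖₊ : ENNReal) ∂mT ≤ ∫⁻ z, G z ∂mT := lintegral_mono_ae hnormle
      _ = _ := hGlint
      _ ≤ _ := hbound
  have hfint : Integrable f mT :=
    ⟨hfm, lt_of_le_of_lt hflint ENNReal.ofReal_lt_top⟩
  refine ⟨hfint, ?_, ?_, hae_summ⟩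
  · rw [integral_norm_eq_lintegral_enorm hfm]
    refine ENNReal.toReal_le_of_le_ofReal
      (tsum_nonneg fun k => mul_nonneg (norm2_nonneg' _) (norm2_nonneg' _)) hflint
  · rw [← integral_tsum hmeas hne]
    exact (integral_congr_ae hr.repr).symm


lemma norm_half_sq (c a b : ℂ) (hc : ‖c‖ = 1) :
    ‖(2⁻¹ : ℂ) * (a + c * b)‖^2
      = (‖a‖^2 + ‖b‖^2 + 2 * ((starRingEnd ℂ) c * (a * (starRingEnd ℂ) b)).re) / 4 := by
  have key : ∀ w : ℂ, ‖w‖^2 = Complex.normSq w := fun w => by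
    rw [Complex.sq_norm]
  have h1 : Complex.normSq c = 1 := by rw [← key, hc]; norm_num
  simp only [key, Complex.normSq_mul, Complex.normSq_add, Complex.normSq_mul, h1]
  have h4 : (a * (starRingEnd ℂ) (c * b)).re = ((starRingEnd ℂ) c * (a * (starRingEnd ℂ) b)).re := by
    rw [map_mul]; ring_nf
  rw [h4]
  have h5 : Complex.normSq 2⁻¹ = 4⁻¹ := by
    rw [Complex.normSq_inv]
    norm_num [Complex.normSq_ofNat]
  rw [h5]
  ring

lemma polar_pointwise (a b : ℂ) :
    a * (starRingEnd ℂ) b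
      = ((2⁻¹:ℂ)*(a + 1*b)) * (starRingEnd ℂ) ((2⁻¹:ℂ)*(a + 1*b))
        - ((2⁻¹:ℂ)*(a + (-1)*b)) * (starRingEnd ℂ) ((2⁻¹:ℂ)*(a + (-1)*b))
        + Complex.I * (((2⁻¹:ℂ)*(a + Complex.I*b)) * (starRingEnd ℂ) ((2⁻¹:ℂ)*(a + Complex.I*b)))
        - Complex.I * (((2⁻¹:ℂ)*(a + (-Complex.I)*b))
            * (starRingEnd ℂ) ((2⁻¹:ℂ)*(a + (-Complex.I)*b))) := by
  simp only [map_mul, map_add, map_neg, map_one, Complex.conj_I, map_inv₀, map_ofNat]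
  ring_nf
  simp only [Complex.I_sq]
  ring

/-- The building block of the polarization: `u_k = (x_k + c y_k)/2`. -/
lemma polar_rep {θ f : ℂ → ℂ} {x y : ℕ → ℂ → ℂ} (hθ : IsInner θ) (hr : XRep θ f x y)
    (hbal : ∀ k, norm2 (x k) = norm2 (y k)) (c : ℂ) (hc : ‖c‖ = 1) :
    XRep θ
      (fun z => ∑' k, ((2⁻¹ : ℂ) * (x k z + c * y k z))
        * (starRingEnd ℂ) ((2⁻¹ : ℂ) * (x k z + c * y k z)))
      (fun k z => (2⁻¹ : ℂ) * (x k z + c * y k z))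
      (fun k z => (2⁻¹ : ℂ) * (x k z + c * y k z)) ∧
    (∑' k, norm2 (fun z => (2⁻¹ : ℂ) * (x k z + c * y k z))
        * norm2 (fun z => (2⁻¹ : ℂ) * (x k z + c * y k z)))
      = (∑' k, norm2 (x k) * norm2 (y k)) / 2
          + ((starRingEnd ℂ) c * ∫ z, f z ∂mT).re / 2 := by
  set u : ℕ → ℂ → ℂ := fun k z => (2⁻¹ : ℂ) * (x k z + c * y k z) with hu
  set J : ℕ → ℂ := fun k => ∫ z, x k z * (starRingEnd ℂ) (y k z) ∂mT with hJ
  have hmemu : ∀ k, MemK 2 θ (u k) := by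
    intro k
    exact (MemK.add hθ (hr.memx k) ((hr.memy k).const_mul c)).const_mul (2⁻¹ : ℂ)
  have hJle : ∀ k, ‖J k‖ ≤ norm2 (x k) * norm2 (y k) :=
    fun k => norm_integral_mul_conj (hr.memx k).1 (hr.memy k).1
  have hJsumm : Summable J := Summable.of_norm_bounded hr.sum hJle
  -- the per-k norm computation
  have hkey : ∀ k, norm2 (u k) * norm2 (u k)
      = (norm2 (x k) * norm2 (y k)) / 2 + ((starRingEnd ℂ) c * J k).re / 2 := by
    intro k
    have h1 : norm2 (u k) * norm2 (u k) = ∫ z, ‖u k z‖ ^ 2 ∂mT := by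
      rw [nsq_eq (hmemu k).1, sq]
    rw [h1]
    have h2 : ∀ z, ‖u k z‖ ^ 2
        = (‖x k z‖^2 + ‖y k z‖^2
            + 2 * ((starRingEnd ℂ) c * (x k z * (starRingEnd ℂ) (y k z))).re) / 4 :=
      fun z => norm_half_sq c _ _ hc
    have hconst : Integrable
        (fun z => ((starRingEnd ℂ) c * (x k z * (starRingEnd ℂ) (y k z)))) mT :=
      (integrable_mul_conj (hr.memx k).1 (hr.memy k).1).const_mul _
    have hre : Integrable
        (fun z => ((starRingEnd ℂ) c * (x k z * (starRingEnd ℂ) (y k z))).re) mT := by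
      have := hconst.re
      simpa [RCLike.re_to_complex] using this
    have hx2 : Integrable (fun z => ‖x k z‖ ^ 2) mT := nsq_integrable (hr.memx k).1
    have hy2 : Integrable (fun z => ‖y k z‖ ^ 2) mT := nsq_integrable (hr.memy k).1
    set R : ℂ → ℝ := fun z => ((starRingEnd ℂ) c * (x k z * (starRingEnd ℂ) (y k z))).re with hR
    have h3 : ∫ z, ‖u k z‖ ^ 2 ∂mT
        = (∫ z, ‖x k z‖^2 ∂mT + ∫ z, ‖y k z‖^2 ∂mT + 2 * ∫ z, R z ∂mT) / 4 := by
      have e0 : ∫ z, ‖u k z‖ ^ 2 ∂mT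
          = ∫ z, (‖x k z‖^2 + ‖y k z‖^2 + 2 * R z) / 4 ∂mT :=
        integral_congr_ae (Eventually.of_forall fun z => by simp only []; rw [h2 z, hR])
      have e1 : ∫ z, (‖x k z‖^2 + ‖y k z‖^2 + 2 * R z) / 4 ∂mT
          = (∫ z, (‖x k z‖^2 + ‖y k z‖^2 + 2 * R z) ∂mT) / 4 := integral_div 4 _
      have e2 : ∫ z, (‖x k z‖^2 + ‖y k z‖^2 + 2 * R z) ∂mT
          = (∫ z, (‖x k z‖^2 + ‖y k z‖^2) ∂mT) + ∫ z, 2 * R z ∂mT :=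
        integral_add (hx2.add hy2) (hre.const_mul 2)
      have e3 : ∫ z, (‖x k z‖^2 + ‖y k z‖^2) ∂mT
          = (∫ z, ‖x k z‖^2 ∂mT) + ∫ z, ‖y k z‖^2 ∂mT := integral_add hx2 hy2
      have e4 : ∫ z, 2 * R z ∂mT = 2 * ∫ z, R z ∂mT := integral_const_mul 2 _
      rw [e0, e1, e2, e3, e4]
    rw [h3, nsq_eq (hr.memx k).1, nsq_eq (hr.memy k).1]
    have h4 : ∫ z, R z ∂mT
        = ((starRingEnd ℂ) c * J k).re := by
      have h5 := integral_re hconst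
      simp only [RCLike.re_to_complex] at h5
      rw [h5, hJ]
      congr 1
      exact integral_const_mul _ _
    rw [h4, hbal k, ← hbal k]
    ring
  -- summability of the re-part
  have hresumm : Summable fun k => ((starRingEnd ℂ) c * J k).re := by
    refine Summable.of_norm_bounded hr.sum fun k => ?_
    rw [Real.norm_eq_abs]
    calc |((starRingEnd ℂ) c * J k).re| ≤ ‖(starRingEnd ℂ) c * J k‖ :=
          Complex.abs_re_le_norm _
      _ = ‖J k‖ := by
          rw [norm_mul, RCLike.norm_conj, hc, one_mul]
      _ ≤ _ := hJle k
  constructor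
  · refine ⟨hmemu, hmemu, ?_, Eventually.of_forall fun z => rfl⟩
    refine Summable.congr ?_ (fun k => (hkey k).symm)
    exact (hr.sum.div_const 2).add (hresumm.div_const 2)
  · calc ∑' k, norm2 (u k) * norm2 (u k)
        = ∑' k, ((norm2 (x k) * norm2 (y k)) / 2 + ((starRingEnd ℂ) c * J k).re / 2) :=
          tsum_congr hkey
      _ = (∑' k, norm2 (x k) * norm2 (y k)) / 2
            + (∑' k, ((starRingEnd ℂ) c * J k).re) / 2 := by
          rw [Summable.tsum_add (hr.sum.div_const 2) (hresumm.div_const 2), tsum_div_const,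
            tsum_div_const]
      _ = (∑' k, norm2 (x k) * norm2 (y k)) / 2
            + ((starRingEnd ℂ) c * ∫ z, f z ∂mT).re / 2 := by
          congr 1
          have hsum : ∑' k, J k = ∫ z, f z ∂mT := (rep_facts hr).2.2.1
          rw [← Complex.re_tsum (hJsumm.mul_left _), tsum_mul_left, hsum]


lemma XNorm_bddBelow (θ f : ℂ → ℂ) :
    BddBelow {c | ∃ x y, XRep θ f x y ∧ (∑' k, norm2 (x k) * norm2 (y k)) = c} := by
  refine ⟨0, fun c hc => ?_⟩
  obtain ⟨x, y, hr, rfl⟩ := hc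
  exact tsum_nonneg fun k => mul_nonneg (norm2_nonneg' _) (norm2_nonneg' _)

lemma XNorm_le {θ f : ℂ → ℂ} {x y : ℕ → ℂ → ℂ} (hr : XRep θ f x y) :
    XNorm θ f ≤ ∑' k, norm2 (x k) * norm2 (y k) :=
  csInf_le (XNorm_bddBelow θ f) ⟨x, y, hr, rfl⟩

lemma XNorm_nonneg {θ f : ℂ → ℂ} (hf : MemX θ f) : 0 ≤ XNorm θ f := by
  obtain ⟨x, y, hr⟩ := hf
  refine le_csInf ⟨_, ⟨x, y, hr, rfl⟩⟩ ?_
  rintro c ⟨x', y', hr', rfl⟩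
  exact tsum_nonneg fun k => mul_nonneg (norm2_nonneg' _) (norm2_nonneg' _)

lemma integral_norm_le_XNorm {θ f : ℂ → ℂ} (hf : MemX θ f) :
    ∫ z, ‖f z‖ ∂mT ≤ XNorm θ f := by
  obtain ⟨x, y, hr⟩ := hf
  refine le_csInf ⟨_, ⟨x, y, hr, rfl⟩⟩ ?_
  rintro c ⟨x', y', hr', rfl⟩
  exact (rep_facts hr').2.1

lemma XRep_zero (θ : ℂ → ℂ) :
    XRep θ (fun _ => (0:ℂ)) (fun _ _ => (0:ℂ)) (fun _ _ => (0:ℂ)) := by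
  refine ⟨fun k => MemK_zero θ, fun k => MemK_zero θ, ?_, ?_⟩
  · have : (fun k : ℕ => norm2 (fun _ : ℂ => (0:ℂ)) * norm2 (fun _ : ℂ => (0:ℂ)))
        = fun _ : ℕ => (0:ℝ) := by
      funext k
      have : norm2 (fun _ : ℂ => (0:ℂ)) = 0 := by rw [norm2, eLpNorm_zero']; rfl
      rw [this, mul_zero]
    rw [this]
    exact summable_zero
  · refine Eventually.of_forall fun z => ?_
    simp

lemma MemX_zero (θ : ℂ → ℂ) : MemX θ (fun _ => (0:ℂ)) := ⟨_, _, XRep_zero θ⟩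

lemma XNorm_zero_nonpos (θ : ℂ → ℂ) : XNorm θ (fun _ => (0:ℂ)) ≤ 0 := by
  refine le_trans (XNorm_le (XRep_zero θ)) ?_
  refine le_of_eq ?_
  have : (fun k : ℕ => norm2 (fun _ : ℂ => (0:ℂ)) * norm2 (fun _ : ℂ => (0:ℂ)))
      = fun _ : ℕ => (0:ℝ) := by
    funext k
    have : norm2 (fun _ : ℂ => (0:ℂ)) = 0 := by rw [norm2, eLpNorm_zero']; rfl
    rw [this, mul_zero]
  rw [this, tsum_zero]

lemma XRep.const_mul {θ f : ℂ → ℂ} {x y : ℕ → ℂ → ℂ} (hr : XRep θ f x y) (c : ℂ) :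
    XRep θ (fun z => c * f z) (fun k z => c * x k z) y := by
  refine ⟨fun k => (hr.memx k).const_mul c, hr.memy, ?_, ?_⟩
  · refine Summable.congr ((hr.sum.mul_left ‖c‖)) fun k => ?_
    rw [norm2_const_mul]
    ring
  · filter_upwards [hr.repr] with z h
    rw [h, ← tsum_mul_left]
    exact tsum_congr fun k => by ring

lemma XNorm_const_mul_le {θ f : ℂ → ℂ} (c : ℂ) (hc : ‖c‖ = 1) (hf : MemX θ f) :
    XNorm θ (fun z => c * f z) ≤ XNorm θ f := by
  obtain ⟨x0, y0, hr0⟩ := hf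
  refine le_csInf ⟨_, ⟨x0, y0, hr0, rfl⟩⟩ ?_
  rintro b ⟨x, y, hr, rfl⟩
  refine le_trans (XNorm_le (hr.const_mul c)) ?_
  refine le_of_eq (tsum_congr fun k => ?_)
  rw [norm2_const_mul, hc, one_mul]

lemma diag_nonneg (u : ℕ → ℂ → ℂ) (z : ℂ) :
    (∑' k, u k z * (starRingEnd ℂ) (u k z)).im = 0 ∧
      0 ≤ (∑' k, u k z * (starRingEnd ℂ) (u k z)).re := by
  have h : ∀ k, u k z * (starRingEnd ℂ) (u k z) = ((Complex.normSq (u k z) : ℝ) : ℂ) :=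
    fun k => Complex.mul_conj _
  rw [tsum_congr h, ← Complex.ofReal_tsum]
  refine ⟨by simp, ?_⟩
  simp only [Complex.ofReal_re]
  exact tsum_nonneg fun k => Complex.normSq_nonneg _

lemma sq_summable_ae {g : ℕ → ℂ → ℂ} (hmem : ∀ k, MemLp (g k) 2 mT)
    (hs : Summable fun k => norm2 (g k) ^ 2) :
    ∀ᵐ z ∂mT, Summable fun k => ‖g k z‖ ^ 2 := by
  have hmeas : ∀ k, AEMeasurable (fun z => (‖g k z‖₊ : ENNReal) ^ 2) mT :=
    fun k => ((hmem k).aestronglyMeasurable.enorm).pow_const 2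
  have hlin : ∀ k, ∫⁻ z, (‖g k z‖₊ : ENNReal) ^ 2 ∂mT = ENNReal.ofReal (norm2 (g k) ^ 2) := by
    intro k
    rw [← nsq_eq (hmem k),
      ofReal_integral_eq_lintegral_ofReal (nsq_integrable (hmem k))
        (Eventually.of_forall fun z => by positivity)]
    refine lintegral_congr fun z => ?_
    rw [ENNReal.ofReal_pow (norm_nonneg _), ofReal_norm, enorm_eq_nnnorm]
  have hfin : ∫⁻ z, ∑' k, (‖g k z‖₊ : ENNReal) ^ 2 ∂mT ≠ ⊤ := by
    rw [lintegral_tsum hmeas]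
    have : ∑' k, ∫⁻ z, (‖g k z‖₊ : ENNReal) ^ 2 ∂mT
        = ∑' k, ENNReal.ofReal (norm2 (g k) ^ 2) := tsum_congr hlin
    rw [this, ← ENNReal.ofReal_tsum_of_nonneg (fun k => by positivity) hs]
    exact ENNReal.ofReal_ne_top
  have hae := ae_lt_top' (AEMeasurable.ennreal_tsum hmeas) hfin
  filter_upwards [hae] with z hz
  have h1 : ∑' k, ((‖g k z‖₊ ^ 2 : NNReal) : ENNReal) ≠ ⊤ := by
    refine ne_of_lt (lt_of_le_of_lt (le_of_eq ?_) hz)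
    exact tsum_congr fun k => by rw [ENNReal.coe_pow]
  have h2 : Summable fun k => (‖g k z‖₊ ^ 2 : NNReal) :=
    ENNReal.tsum_coe_ne_top_iff_summable.1 h1
  have h3 := NNReal.summable_coe.2 h2
  refine h3.congr fun k => ?_
  push_cast
  rfl

lemma trivial_case {f : ℂ → ℂ} (hint : Integrable f mT) (c : ℂ) (hc : ‖c‖ = 1)
    (h0 : ∫ z, (‖f z‖ - ((starRingEnd ℂ) c * f z).re) ∂mT = 0) :
    (∀ᵐ z ∂mT, ((starRingEnd ℂ) c * f z).im = 0 ∧ 0 ≤ ((starRingEnd ℂ) c * f z).re) ∧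
      (∀ z, f z = c * ((starRingEnd ℂ) c * f z)) := by
  have hcc : c * (starRingEnd ℂ) c = 1 := by
    rw [Complex.mul_conj]
    have : Complex.normSq c = 1 := by
      rw [← Complex.sq_norm, hc]; norm_num
    rw [this, Complex.ofReal_one]
  have hintre : Integrable (fun z => ((starRingEnd ℂ) c * f z).re) mT := by
    simpa [RCLike.re_to_complex] using (hint.const_mul ((starRingEnd ℂ) c)).re
  have hnonneg : 0 ≤ fun z => ‖f z‖ - ((starRingEnd ℂ) c * f z).re := by
    intro z
    simp only [Pi.zero_apply]
    have h1 : ((starRingEnd ℂ) c * f z).re ≤ ‖(starRingEnd ℂ) c * f z‖ :=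
      Complex.re_le_norm _
    have h2 : ‖(starRingEnd ℂ) c * f z‖ = ‖f z‖ := by
      rw [norm_mul, RCLike.norm_conj, hc, one_mul]
    linarith
  have hzero : (fun z => ‖f z‖ - ((starRingEnd ℂ) c * f z).re) =ᵐ[mT] 0 :=
    (integral_eq_zero_iff_of_nonneg hnonneg (hint.norm.sub hintre)).1 h0
  constructor
  · filter_upwards [hzero] with z hz
    simp only [Pi.zero_apply] at hz
    have heq : ‖f z‖ = ((starRingEnd ℂ) c * f z).re := by linarith
    set w := (starRingEnd ℂ) c * f z with hw
    have habs : ‖w‖ = ‖f z‖ := by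
      rw [hw, norm_mul, RCLike.norm_conj, hc, one_mul]
    have hre : w.re = ‖w‖ := by rw [habs, ← heq]
    have h2 := Complex.sq_norm w
    rw [Complex.normSq_apply] at h2
    rw [← hre] at h2
    have h3 : w.im * w.im = 0 := by nlinarith [h2]
    refine ⟨mul_self_eq_zero.1 h3, ?_⟩
    rw [hre]
    exact norm_nonneg w
  · intro z
    rw [← mul_assoc, hcc, one_mul]

/-- **Proposition.** Any element `f` of `X` is a linear combination
`f = f₁ − f₂ + i f₃ − i f₄` of four nonnegative elements of `X`, each of `X`-norm at
most `‖f‖_X`. -/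
theorem X_decomposition_four_nonneg (θ : ℂ → ℂ) (hθ : IsInner θ)
    (f : ℂ → ℂ) (hf : MemX θ f) :
    ∃ f₁ f₂ f₃ f₄ : ℂ → ℂ,
      (MemX θ f₁ ∧ MemX θ f₂ ∧ MemX θ f₃ ∧ MemX θ f₄) ∧
      ((∀ᵐ z ∂mT, (f₁ z).im = 0 ∧ 0 ≤ (f₁ z).re) ∧
       (∀ᵐ z ∂mT, (f₂ z).im = 0 ∧ 0 ≤ (f₂ z).re) ∧
       (∀ᵐ z ∂mT, (f₃ z).im = 0 ∧ 0 ≤ (f₃ z).re) ∧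
       (∀ᵐ z ∂mT, (f₄ z).im = 0 ∧ 0 ≤ (f₄ z).re)) ∧
      (XNorm θ f₁ ≤ XNorm θ f ∧ XNorm θ f₂ ≤ XNorm θ f ∧
       XNorm θ f₃ ≤ XNorm θ f ∧ XNorm θ f₄ ≤ XNorm θ f) ∧
      (∀ᵐ z ∂mT, f z = f₁ z - f₂ z + Complex.I * f₃ z - Complex.I * f₄ z) := by
  classical
  obtain ⟨x0, y0, hr0⟩ := id hf
  have hint : Integrable f mT := (rep_facts hr0).1
  have hintre : ∀ c : ℂ, Integrable (fun z => ((starRingEnd ℂ) c * f z).re) mT := by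
    intro c
    simpa [RCLike.re_to_complex] using (hint.const_mul ((starRingEnd ℂ) c)).re
  set A : ℂ → ℝ := fun c => ∫ z, (‖f z‖ - ((starRingEnd ℂ) c * f z).re) ∂mT with hA
  have habs : ∀ (c : ℂ), ‖c‖ = 1 → ∀ z, ‖(starRingEnd ℂ) c * f z‖ = ‖f z‖ := by
    intro c hc z
    rw [norm_mul, RCLike.norm_conj, hc, one_mul]
  have hAnonneg : ∀ c : ℂ, ‖c‖ = 1 → 0 ≤ A c := by
    intro c hc
    refine integral_nonneg fun z => ?_
    have h1 : ((starRingEnd ℂ) c * f z).re ≤ ‖(starRingEnd ℂ) c * f z‖ :=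
      Complex.re_le_norm _
    have h2 : ‖(starRingEnd ℂ) c * f z‖ = ‖f z‖ := by
      rw [habs c hc z]
    simp only [Pi.zero_apply]
    linarith
  -- properties of the zero function
  have hzero_mem : MemX θ (fun _ => (0:ℂ)) := MemX_zero θ
  have hzero_nonneg : ∀ᵐ z ∂mT, ((fun _ : ℂ => (0:ℂ)) z).im = 0 ∧
      0 ≤ ((fun _ : ℂ => (0:ℂ)) z).re := Eventually.of_forall fun z => by simp
  have hzero_norm : XNorm θ (fun _ => (0:ℂ)) ≤ XNorm θ f :=
    le_trans (XNorm_zero_nonpos θ) (XNorm_nonneg hf)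
  -- the trivial (extremal) branch
  have key : ∀ c : ℂ, ‖c‖ = 1 → A c = 0 →
      MemX θ (fun z => (starRingEnd ℂ) c * f z) ∧
      (∀ᵐ z ∂mT, ((starRingEnd ℂ) c * f z).im = 0 ∧ 0 ≤ ((starRingEnd ℂ) c * f z).re) ∧
      XNorm θ (fun z => (starRingEnd ℂ) c * f z) ≤ XNorm θ f ∧
      ∀ z, f z = c * ((starRingEnd ℂ) c * f z) := by
    intro c hc h0
    have ht := trivial_case hint c hc h0
    exact ⟨⟨_, _, hr0.const_mul _⟩, ht.1,
      XNorm_const_mul_le _ (by rw [RCLike.norm_conj, hc]) hf, ht.2⟩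
  by_cases htriv : A 1 = 0 ∨ A (-1) = 0 ∨ A Complex.I = 0 ∨ A (-Complex.I) = 0
  · rcases htriv with h | h | h | h
    · obtain ⟨hm, hpos, hnorm, hid⟩ := key 1 (by simp) h
      refine ⟨fun z => (starRingEnd ℂ) 1 * f z, fun _ => 0, fun _ => 0, fun _ => 0,
        ⟨hm, hzero_mem, hzero_mem, hzero_mem⟩, ⟨hpos, hzero_nonneg, hzero_nonneg, hzero_nonneg⟩,
        ⟨hnorm, hzero_norm, hzero_norm, hzero_norm⟩, Eventually.of_forall fun z => ?_⟩
      have := hid z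
      rw [this]
      ring
    · obtain ⟨hm, hpos, hnorm, hid⟩ := key (-1) (by simp) h
      refine ⟨fun _ => 0, fun z => (starRingEnd ℂ) (-1) * f z, fun _ => 0, fun _ => 0,
        ⟨hzero_mem, hm, hzero_mem, hzero_mem⟩, ⟨hzero_nonneg, hpos, hzero_nonneg, hzero_nonneg⟩,
        ⟨hzero_norm, hnorm, hzero_norm, hzero_norm⟩, Eventually.of_forall fun z => ?_⟩
      have := hid z
      rw [this]
      ring
    · obtain ⟨hm, hpos, hnorm, hid⟩ := key Complex.I (by simp) h
      refine ⟨fun _ => 0, fun _ => 0, fun z => (starRingEnd ℂ) Complex.I * f z, fun _ => 0,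
        ⟨hzero_mem, hzero_mem, hm, hzero_mem⟩, ⟨hzero_nonneg, hzero_nonneg, hpos, hzero_nonneg⟩,
        ⟨hzero_norm, hzero_norm, hnorm, hzero_norm⟩, Eventually.of_forall fun z => ?_⟩
      have := hid z
      rw [this]
      ring
    · obtain ⟨hm, hpos, hnorm, hid⟩ := key (-Complex.I) (by simp) h
      refine ⟨fun _ => 0, fun _ => 0, fun _ => 0, fun z => (starRingEnd ℂ) (-Complex.I) * f z,
        ⟨hzero_mem, hzero_mem, hzero_mem, hm⟩, ⟨hzero_nonneg, hzero_nonneg, hzero_nonneg, hpos⟩,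
        ⟨hzero_norm, hzero_norm, hzero_norm, hnorm⟩, Eventually.of_forall fun z => ?_⟩
      have := hid z
      rw [this]
      ring
  · -- the main branch: all defects are positive
    push_neg at htriv
    obtain ⟨h1, h2, h3, h4⟩ := htriv
    have hp1 : 0 < A 1 := lt_of_le_of_ne (hAnonneg 1 (by simp)) (Ne.symm h1)
    have hp2 : 0 < A (-1) := lt_of_le_of_ne (hAnonneg (-1) (by simp)) (Ne.symm h2)
    have hp3 : 0 < A Complex.I := lt_of_le_of_ne (hAnonneg Complex.I (by simp)) (Ne.symm h3)
    have hp4 : 0 < A (-Complex.I) :=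
      lt_of_le_of_ne (hAnonneg (-Complex.I) (by simp)) (Ne.symm h4)
    set δ : ℝ := min (min (A 1) (A (-1))) (min (A Complex.I) (A (-Complex.I))) with hδ
    have hδpos : 0 < δ := by
      rw [hδ, lt_min_iff, lt_min_iff, lt_min_iff]
      exact ⟨⟨hp1, hp2⟩, hp3, hp4⟩
    -- choose a representation with sum < ‖f‖_X + δ and balance it
    have hSne : Set.Nonempty
        {c | ∃ x y, XRep θ f x y ∧ (∑' k, norm2 (x k) * norm2 (y k)) = c} :=
      ⟨_, ⟨x0, y0, hr0, rfl⟩⟩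
    obtain ⟨b, hbmem, hblt⟩ := Real.lt_sInf_add_pos hSne hδpos
    obtain ⟨x1, y1, hr1, hb⟩ := hbmem
    have hXeq : sInf {c | ∃ x y, XRep θ f x y ∧ (∑' k, norm2 (x k) * norm2 (y k)) = c}
        = XNorm θ f := rfl
    rw [hXeq] at hblt
    obtain ⟨x, y, hr, hbal, hprod⟩ := exists_balanced hr1
    have hs_lt : ∑' k, norm2 (x k) * norm2 (y k) < XNorm θ f + δ := by
      rw [tsum_congr hprod, hb]
      exact hblt
    have hL : ∫ z, ‖f z‖ ∂mT ≤ XNorm θ f := integral_norm_le_XNorm hf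
    -- A c in terms of ∫ f
    have hAeq : ∀ c : ℂ, A c
        = (∫ z, ‖f z‖ ∂mT) - ((starRingEnd ℂ) c * ∫ z, f z ∂mT).re := by
      intro c
      simp only [hA]
      rw [integral_sub hint.norm (hintre c)]
      congr 1
      have h5 := integral_re (hint.const_mul ((starRingEnd ℂ) c))
      simp only [RCLike.re_to_complex] at h5
      rw [h5, integral_const_mul]
    -- the four polarization pieces
    have main : ∀ c : ℂ, ‖c‖ = 1 → δ ≤ A c →
        MemX θ (fun z => ∑' k, ((2⁻¹ : ℂ) * (x k z + c * y k z))
          * (starRingEnd ℂ) ((2⁻¹ : ℂ) * (x k z + c * y k z))) ∧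
        XNorm θ (fun z => ∑' k, ((2⁻¹ : ℂ) * (x k z + c * y k z))
          * (starRingEnd ℂ) ((2⁻¹ : ℂ) * (x k z + c * y k z))) ≤ XNorm θ f := by
      intro c hc hδc
      obtain ⟨hrep, hval⟩ := polar_rep hθ hr hbal c hc
      refine ⟨⟨_, _, hrep⟩, ?_⟩
      refine le_trans (XNorm_le hrep) ?_
      rw [hval]
      have hre_eq : ((starRingEnd ℂ) c * ∫ z, f z ∂mT).re = (∫ z, ‖f z‖ ∂mT) - A c := by
        rw [hAeq c]; ring
      rw [hre_eq]
      linarith [hs_lt, hL, hδc]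
    have hδ1 : δ ≤ A 1 := le_trans (min_le_left _ _) (min_le_left _ _)
    have hδ2 : δ ≤ A (-1) := le_trans (min_le_left _ _) (min_le_right _ _)
    have hδ3 : δ ≤ A Complex.I := le_trans (min_le_right _ _) (min_le_left _ _)
    have hδ4 : δ ≤ A (-Complex.I) := le_trans (min_le_right _ _) (min_le_right _ _)
    obtain ⟨hm1, hn1⟩ := main 1 (by simp) hδ1
    obtain ⟨hm2, hn2⟩ := main (-1) (by simp) hδ2
    obtain ⟨hm3, hn3⟩ := main Complex.I (by simp) hδ3
    obtain ⟨hm4, hn4⟩ := main (-Complex.I) (by simp) hδ4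
    -- pointwise square-summability
    have hsqx : ∀ᵐ z ∂mT, Summable fun k => ‖x k z‖ ^ 2 := by
      refine sq_summable_ae (fun k => (hr.memx k).1) ?_
      refine hr.sum.congr fun k => ?_
      rw [sq, hbal k]
    have hsqy : ∀ᵐ z ∂mT, Summable fun k => ‖y k z‖ ^ 2 := by
      refine sq_summable_ae (fun k => (hr.memy k).1) ?_
      refine hr.sum.congr fun k => ?_
      rw [sq, ← hbal k]
    refine ⟨_, _, _, _, ⟨hm1, hm2, hm3, hm4⟩,
      ⟨Eventually.of_forall fun z =>
          diag_nonneg (fun k z => (2⁻¹ : ℂ) * (x k z + 1 * y k z)) z,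
       Eventually.of_forall fun z =>
          diag_nonneg (fun k z => (2⁻¹ : ℂ) * (x k z + (-1) * y k z)) z,
       Eventually.of_forall fun z =>
          diag_nonneg (fun k z => (2⁻¹ : ℂ) * (x k z + Complex.I * y k z)) z,
       Eventually.of_forall fun z =>
          diag_nonneg (fun k z => (2⁻¹ : ℂ) * (x k z + (-Complex.I) * y k z)) z⟩,
      ⟨hn1, hn2, hn3, hn4⟩, ?_⟩
    -- the decomposition identity
    filter_upwards [hr.repr, hsqx, hsqy] with z hz hx2 hy2
    have hTsum : ∀ c : ℂ, ‖c‖ = 1 → Summable (fun k => ((2⁻¹ : ℂ) * (x k z + c * y k z))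
        * (starRingEnd ℂ) ((2⁻¹ : ℂ) * (x k z + c * y k z))) := by
      intro c hc
      refine Summable.of_norm_bounded (g := fun k => (‖x k z‖^2 + ‖y k z‖^2) / 2)
        ((hx2.add hy2).div_const 2) fun k => ?_
      have hb1 : ‖((2⁻¹ : ℂ) * (x k z + c * y k z))
          * (starRingEnd ℂ) ((2⁻¹ : ℂ) * (x k z + c * y k z))‖
          = ‖(2⁻¹ : ℂ) * (x k z + c * y k z)‖^2 := by
        rw [norm_mul, RCLike.norm_conj, sq]
      rw [hb1, norm_half_sq c _ _ hc]
      have hb2 : |((starRingEnd ℂ) c * (x k z * (starRingEnd ℂ) (y k z))).re|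
          ≤ ‖x k z‖ * ‖y k z‖ := by
        calc |((starRingEnd ℂ) c * (x k z * (starRingEnd ℂ) (y k z))).re|
            ≤ ‖(starRingEnd ℂ) c * (x k z * (starRingEnd ℂ) (y k z))‖ :=
              Complex.abs_re_le_norm _
          _ = ‖x k z‖ * ‖y k z‖ := by
              rw [norm_mul, RCLike.norm_conj, hc, one_mul,
                norm_mul, RCLike.norm_conj]
      nlinarith [sq_nonneg (‖x k z‖ - ‖y k z‖), hb2, abs_le.1 hb2]
    have S1 := hTsum 1 (by simp)
    have S2 := hTsum (-1) (by simp)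
    have S3 := (hTsum Complex.I (by simp)).mul_left Complex.I
    have S4 := (hTsum (-Complex.I) (by simp)).mul_left Complex.I
    rw [hz, tsum_congr (fun k => polar_pointwise (x k z) (y k z))]
    rw [Summable.tsum_sub ((S1.sub S2).add S3) S4, Summable.tsum_add (S1.sub S2) S3, Summable.tsum_sub S1 S2,
      tsum_mul_left, tsum_mul_left]
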